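/- Let (X,d) be a length space containing points x,y with d(x,y) > 0. If d is a p-metric for some p ∈ [1,∞], then p = 1. In other words, the metric of a nondegenerate length space cannot be a p-metric for any p > 1. -/

import Mathlib

open scoped ENNReal

/-- The `ℓᵖ` norm of a pair of values in `[0,∞]`, `p ∈ [1,∞]`. -/
noncomputable def lpPair (p : ℝ≥0∞) (a b : ℝ≥0∞) : ℝ≥0∞ :=
  if p = ∞ then max a b else (a ^ p.toReal + b ^ p.toReal) ^ (1 / p.toReal)

/-- `X` is a length space: the distance between any two points is the infimum
of the lengths (extended variations) of continuous paths joining them. -/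
def IsLengthSpace (X : Type*) [PseudoEMetricSpace X] : Prop :=
  ∀ x y : X, edist x y =
    ⨅ (f : ℝ → X) (_ : ContinuousOn f (Set.Icc 0 1)) (_ : f 0 = x) (_ : f 1 = y),
      eVariationOn f (Set.Icc 0 1)

private lemma chain_rpow_aux {X : Type*} [PseudoEMetricSpace X] {q : ℝ} (hq : 0 < q)
    (h : ∀ a b c : X, edist a b ^ q ≤ edist a c ^ q + edist c b ^ q)
    (g : ℕ → X) : ∀ n : ℕ,
      edist (g 0) (g n) ^ q ≤ ∑ i ∈ Finset.range n, edist (g i) (g (i + 1)) ^ q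
  | 0 => by simp [ENNReal.zero_rpow_of_pos hq]
  | (n + 1) => by
      calc edist (g 0) (g (n + 1)) ^ q
          ≤ edist (g 0) (g n) ^ q + edist (g n) (g (n + 1)) ^ q := h _ _ _
        _ ≤ (∑ i ∈ Finset.range n, edist (g i) (g (i + 1)) ^ q)
              + edist (g n) (g (n + 1)) ^ q :=
            add_le_add_left (chain_rpow_aux hq h g n) _
        _ = ∑ i ∈ Finset.range (n + 1), edist (g i) (g (i + 1)) ^ q :=
            (Finset.sum_range_succ _ n).symm

private lemma chain_max_aux {X : Type*} [PseudoEMetricSpace X]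
    (h : ∀ a b c : X, edist a b ≤ max (edist a c) (edist c b))
    (g : ℕ → X) {δ : ℝ≥0∞} : ∀ n : ℕ, (∀ i < n, edist (g i) (g (i + 1)) ≤ δ) →
      edist (g 0) (g n) ≤ δ
  | 0, _ => by simp
  | (n + 1), hδ => by
      calc edist (g 0) (g (n + 1)) ≤ max (edist (g 0) (g n)) (edist (g n) (g (n + 1))) := h _ _ _
        _ ≤ δ := max_le (chain_max_aux h g n fun i hi => hδ i (hi.trans (Nat.lt_succ_self n)))
            (hδ n (Nat.lt_succ_self n))

/-- Existence of fine chains from `x` to `y` with total length at most the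
variation of a path. -/
private lemma exists_chain {X : Type*} [PseudoEMetricSpace X] {x y : X} {f : ℝ → X}
    (hcont : ContinuousOn f (Set.Icc 0 1)) (hf0 : f 0 = x) (hf1 : f 1 = y)
    {δ : ℝ≥0∞} (hδ : 0 < δ) :
    ∃ n : ℕ, ∃ g : ℕ → X, g 0 = x ∧ g n = y ∧ (∀ i < n, edist (g i) (g (i + 1)) ≤ δ) ∧
      (∑ i ∈ Finset.range n, edist (g i) (g (i + 1))) ≤ eVariationOn f (Set.Icc 0 1) := by
  have huc := isCompact_Icc.uniformContinuousOn_of_continuous hcont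
  obtain ⟨η, hη, hkey⟩ := EMetric.uniformContinuousOn_iff.mp huc δ hδ
  obtain ⟨n₀, hn₀⟩ := ENNReal.exists_inv_nat_lt hη.ne'
  set n := n₀ + 1 with hn
  have hnpos : (0 : ℝ) < n := by positivity
  have hninv : ((n : ℝ≥0∞))⁻¹ < η := by
    refine lt_of_le_of_lt ?_ hn₀
    exact ENNReal.inv_le_inv.mpr (by exact_mod_cast Nat.le_succ n₀)
  set u : ℕ → ℝ := fun i => (min i n : ℕ) / (n : ℝ) with hu
  have humono : Monotone u := by
    intro i j hij
    simp only [hu]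
    gcongr
  have humem : ∀ i, u i ∈ Set.Icc (0 : ℝ) 1 := by
    intro i
    constructor
    · positivity
    · rw [div_le_one hnpos]
      exact_mod_cast min_le_right i n
  refine ⟨n, fun i => f (u i), ?_, ?_, ?_, ?_⟩
  · show f (u 0) = x
    have h0 : u 0 = 0 := by simp [hu]
    rw [h0, hf0]
  · show f (u n) = y
    have h1 : u n = 1 := by simp [hu, div_self hnpos.ne']
    rw [h1, hf1]
  · intro i hi
    have hui : u i = (i : ℝ) / n := by
      simp only [hu]; rw [min_eq_left hi.le]
    have hui1 : u (i + 1) = ((i + 1 : ℕ) : ℝ) / n := by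
      simp only [hu]; rw [min_eq_left hi]
    have hdist : edist (u i) (u (i + 1)) < η := by
      rw [hui, hui1, edist_dist, Real.dist_eq]
      have : |(i : ℝ) / n - ((i + 1 : ℕ) : ℝ) / n| = 1 / n := by
        rw [div_sub_div_same, abs_div, abs_of_pos hnpos]
        push_cast
        rw [show (i : ℝ) - (i + 1) = -1 by ring, abs_neg, abs_one]
      rw [this]
      calc ENNReal.ofReal (1 / n) = ((n : ℝ≥0∞))⁻¹ := by
            rw [one_div, ENNReal.ofReal_inv_of_pos hnpos, ENNReal.ofReal_natCast]
        _ < η := hninv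
    exact (hkey (humem i) (humem (i + 1)) hdist).le
  · have := eVariationOn.sum_le (f := f) (n := n) humono humem
    calc (∑ i ∈ Finset.range n, edist (f (u i)) (f (u (i + 1))))
        = ∑ i ∈ Finset.range n, edist (f (u (i + 1))) (f (u i)) := by
          simp_rw [edist_comm]
      _ ≤ eVariationOn f (Set.Icc 0 1) := this

/-- the metric of a length space containing two points at
positive distance cannot be a `p`-metric for any `p > 1`: if it is a
`p`-metric for some `p ∈ [1,∞]`, then `p = 1`. -/
theorem length_space_p_metric_implies_p_eq_one {X : Type*} [PseudoEMetricSpace X]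
    (hX : IsLengthSpace X) {x y : X} (hxy : 0 < edist x y) (hfin : edist x y ≠ ∞)
    (p : ℝ≥0∞) (hp : 1 ≤ p)
    (hpm : ∀ a b c : X, edist a b ≤ lpPair p (edist a c) (edist c b)) :
    p = 1 := by
  by_contra hne
  have hp1 : 1 < p := lt_of_le_of_ne hp (Ne.symm hne)
  -- extract a path of finite variation from `x` to `y`
  have h := hX x y
  have htop : edist x y + 1 < ∞ :=
    ENNReal.add_lt_top.mpr ⟨hfin.lt_top, ENNReal.one_lt_top⟩
  have hlt : (⨅ (f : ℝ → X) (_ : ContinuousOn f (Set.Icc 0 1)) (_ : f 0 = x) (_ : f 1 = y),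
      eVariationOn f (Set.Icc 0 1)) < edist x y + 1 := by
    rw [← h]; exact ENNReal.lt_add_right hfin one_ne_zero
  simp only [iInf_lt_iff] at hlt
  obtain ⟨f, hcont, hf0, hf1, hvar⟩ := hlt
  set V := eVariationOn f (Set.Icc 0 1) with hV
  have hVfin : V ≠ ∞ := (hvar.trans htop).ne
  rcases eq_or_ne p ∞ with hpinf | hpfin
  · -- case p = ∞ : use chains with small links
    have hmax : ∀ a b c : X, edist a b ≤ max (edist a c) (edist c b) := by
      intro a b c
      have := hpm a b c
      rwa [hpinf, lpPair, if_pos rfl] at this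
    have hhalf : 0 < edist x y / 2 := ENNReal.div_pos hxy.ne' ENNReal.ofNat_ne_top
    obtain ⟨n, g, hg0, hgn, hsmall, -⟩ := exists_chain hcont hf0 hf1 hhalf
    have := chain_max_aux hmax g n hsmall
    rw [hg0, hgn] at this
    exact absurd this (not_le.mpr (ENNReal.half_lt_self hxy.ne' hfin))
  · -- case 1 < p < ∞
    set q := p.toReal with hq
    have hq1 : 1 < q := by
      rw [hq, ← ENNReal.toReal_one]
      exact (ENNReal.toReal_lt_toReal ENNReal.one_ne_top hpfin).mpr hp1
    have hq0 : 0 < q := lt_trans one_pos hq1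
    have hpow : ∀ a b c : X, edist a b ^ q ≤ edist a c ^ q + edist c b ^ q := by
      intro a b c
      have h1 := hpm a b c
      rw [lpPair, if_neg hpfin] at h1
      have h2 := ENNReal.rpow_le_rpow h1 hq0.le
      rwa [← ENNReal.rpow_mul, one_div, inv_mul_cancel₀ hq0.ne', ENNReal.rpow_one] at h2
    -- for every finite positive δ, (edist x y)^q ≤ δ^(q-1) * V
    have key : ∀ δ : ℝ≥0∞, 0 < δ → δ ≠ ∞ → edist x y ^ q ≤ δ ^ (q - 1) * V := by
      intro δ hδ hδtop
      obtain ⟨n, g, hg0, hgn, hsmall, hsum⟩ := exists_chain hcont hf0 hf1 hδ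
      have hchain := chain_rpow_aux hq0 hpow g n
      rw [hg0, hgn] at hchain
      refine hchain.trans ?_
      have hterm : ∀ i ∈ Finset.range n,
          edist (g i) (g (i + 1)) ^ q ≤ δ ^ (q - 1) * edist (g i) (g (i + 1)) := by
        intro i hi
        rcases eq_or_ne (edist (g i) (g (i + 1))) 0 with h0 | h0
        · rw [h0, ENNReal.zero_rpow_of_pos hq0, mul_zero]
        · have hle := hsmall i (Finset.mem_range.mp hi)
          have hfin' : edist (g i) (g (i + 1)) ≠ ∞ := (hle.trans_lt hδtop.lt_top).ne
          have hsplit : edist (g i) (g (i + 1)) ^ q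
              = edist (g i) (g (i + 1)) ^ (q - 1) * edist (g i) (g (i + 1)) := by
            have h2 := ENNReal.rpow_add (x := edist (g i) (g (i + 1))) (q - 1) 1 h0 hfin'
            rw [ENNReal.rpow_one, sub_add_cancel] at h2
            exact h2
          calc edist (g i) (g (i + 1)) ^ q
              = edist (g i) (g (i + 1)) ^ (q - 1) * edist (g i) (g (i + 1)) := hsplit
            _ ≤ δ ^ (q - 1) * edist (g i) (g (i + 1)) :=
                mul_le_mul_left (ENNReal.rpow_le_rpow hle (by linarith)) _
      calc (∑ i ∈ Finset.range n, edist (g i) (g (i + 1)) ^ q)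
          ≤ ∑ i ∈ Finset.range n, δ ^ (q - 1) * edist (g i) (g (i + 1)) :=
            Finset.sum_le_sum hterm
        _ = δ ^ (q - 1) * ∑ i ∈ Finset.range n, edist (g i) (g (i + 1)) := by
            rw [Finset.mul_sum]
        _ ≤ δ ^ (q - 1) * V := mul_le_mul_right hsum _
    -- derive a contradiction
    have hd0 : 0 < edist x y ^ q := ENNReal.rpow_pos hxy hfin
    have hdtop : edist x y ^ q ≠ ∞ := (ENNReal.rpow_lt_top_of_nonneg hq0.le hfin).ne
    rcases eq_or_ne V 0 with hV0 | hV0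
    · have := key 1 one_pos ENNReal.one_ne_top
      rw [hV0, mul_zero] at this
      exact absurd this (not_le.mpr hd0)
    · -- choose δ with δ^(q-1) = (edist x y)^q / (2 * V)
      set C : ℝ≥0∞ := edist x y ^ q / (2 * V) with hC
      have hCpos : 0 < C :=
        ENNReal.div_pos hd0.ne' (ENNReal.mul_ne_top ENNReal.ofNat_ne_top hVfin)
      have hCtop : C ≠ ∞ := by
        rw [hC]
        exact (ENNReal.div_lt_top hdtop (by simp [hV0])).ne
      set δ : ℝ≥0∞ := C ^ (q - 1)⁻¹ with hδdef
      have hδpos : 0 < δ := ENNReal.rpow_pos hCpos hCtop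
      have hδtop : δ ≠ ∞ := (ENNReal.rpow_lt_top_of_nonneg (inv_nonneg.mpr (by linarith)) hCtop).ne
      have hδpow : δ ^ (q - 1) = C := by
        rw [hδdef, ← ENNReal.rpow_mul, inv_mul_cancel₀ (by linarith : q - 1 ≠ 0),
          ENNReal.rpow_one]
      have hkey := key δ hδpos hδtop
      rw [hδpow, hC] at hkey
      have hfinal : edist x y ^ q / (2 * V) * V = edist x y ^ q / 2 := by
        rw [div_eq_mul_inv, div_eq_mul_inv,
          ENNReal.mul_inv (Or.inr hVfin) (Or.inr hV0), mul_assoc, mul_assoc,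
          ENNReal.inv_mul_cancel hV0 hVfin, mul_one]
      rw [hfinal] at hkey
      exact absurd hkey (not_le.mpr (ENNReal.half_lt_self hd0.ne' hdtop))
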